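/- Let κ > 0, δ > 0, and let F : [0,∞) → [0,∞) be convex with F(0) = 0 and F(r) > 0 for r > 0, continuously differentiable on (0,∞), and satisfying F'(r)·r ≥ (1+δ)·F(r) for all r > 0. Let G : (0,∞) → (0,∞) denote the inverse function of r ↦ F(r)/r on (0,∞) (this inverse exists, since F(r)/r is strictly increasing with limit 0 at 0⁺ and limit ∞ at ∞). Suppose Λ : [0,∞) → [0,∞) is twice differentiable with Λ'(t) < 0 for all t ≥ 0, satisfies the differential inequality Λ''(t) ≥ −2κ·Λ'(t) + 2·F(−Λ'(t)) for all t ≥ 0, and satisfies Λ(T) → 0 as T → ∞. Then Λ(0) ≤ ∫₀^∞ G( κ / ( e^{2δκt}·(1 + κ·(−Λ'(0))/F(−Λ'(0))) − 1 ) ) dt. (This is the analytic core of the proof of Theorem 3.4, applied there with Λ(t) = Ent_μ(P_t f), Λ'(0) = −I(f).) -/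

import Mathlib

open Real Filter MeasureTheory Set

/-- Analytic core of Theorem 3.4: under the `CD_Υ(κ,F)` differential inequality for the
entropy function `Λ`, one gets the entropy-information bound. -/
theorem stmt_0 (κ δ : ℝ) (hκ : 0 < κ) (hδ : 0 < δ)
    (F F' : ℝ → ℝ)
    (hFconv : ConvexOn ℝ (Ici 0) F)
    (hF0 : F 0 = 0)
    (hFnonneg : ∀ r ∈ Ici (0:ℝ), 0 ≤ F r)
    (hFpos : ∀ r : ℝ, 0 < r → 0 < F r)
    (hFderiv : ∀ r : ℝ, 0 < r → HasDerivAt F (F' r) r)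
    (hF'cont : ContinuousOn F' (Ioi 0))
    (hFgrow : ∀ r : ℝ, 0 < r → (1 + δ) * F r ≤ F' r * r)
    (G : ℝ → ℝ)
    (hG1 : ∀ r : ℝ, 0 < r → G (F r / r) = r)
    (hG2 : ∀ s : ℝ, 0 < s → 0 < G s ∧ F (G s) / G s = s)
    (Λ Λ' Λ'' : ℝ → ℝ)
    (hΛnonneg : ∀ t ∈ Ici (0:ℝ), 0 ≤ Λ t)
    (hΛd : ∀ t ∈ Ici (0:ℝ), HasDerivWithinAt Λ (Λ' t) (Ici 0) t)
    (hΛd' : ∀ t ∈ Ici (0:ℝ), HasDerivWithinAt Λ' (Λ'' t) (Ici 0) t)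
    (hΛ'neg : ∀ t ∈ Ici (0:ℝ), Λ' t < 0)
    (hODE : ∀ t ∈ Ici (0:ℝ), -2 * κ * Λ' t + 2 * F (-Λ' t) ≤ Λ'' t)
    (hlim : Tendsto Λ atTop (nhds 0)) :
    ENNReal.ofReal (Λ 0) ≤
      ∫⁻ t in Ioi (0:ℝ), ENNReal.ofReal
        (G (κ / (Real.exp (2 * δ * κ * t) * (1 + κ * (-Λ' 0) / F (-Λ' 0)) - 1))) := by
  have hu : ∀ t ∈ Ici (0:ℝ), 0 < -Λ' t := fun t ht => neg_pos.2 (hΛ'neg t ht)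
  have hFu : ∀ t ∈ Ici (0:ℝ), 0 < F (-Λ' t) := fun t ht => hFpos _ (hu t ht)
  set C : ℝ := 1 + κ * (-Λ' 0) / F (-Λ' 0) with hCdef
  have hC1 : 1 < C := by
    have h1 := hu 0 self_mem_Ici
    have h2 := hFu 0 self_mem_Ici
    have : 0 < κ * (-Λ' 0) / F (-Λ' 0) := by positivity
    simp only [hCdef]; linarith
  -- strict monotonicity of r ↦ F r / r on (0,∞)
  have hslope : StrictMonoOn (fun r => F r / r) (Ioi (0:ℝ)) := by
    apply strictMonoOn_of_hasDerivWithinAt_pos (convex_Ioi 0)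
      (f' := fun x => (F' x * x - F x * 1) / x ^ 2)
    · intro x hx
      exact (((hFderiv x hx).continuousAt.continuousWithinAt).div
        continuousWithinAt_id (ne_of_gt hx))
    · intro x hx
      rw [interior_Ioi] at hx ⊢
      exact (((hFderiv x hx).div (hasDerivAt_id x) (ne_of_gt hx)).hasDerivWithinAt)
    · intro x hx
      rw [interior_Ioi] at hx
      have h1 := hFgrow x hx
      have h2 := hFpos x hx
      have h3 : 0 < F' x * x - F x * 1 := by nlinarith
      exact div_pos h3 (pow_pos hx 2)
  have hsl : ∀ a b : ℝ, 0 < a → 0 < b → F a / a ≤ F b / b → a ≤ b := by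
    intro a b ha hb h
    by_contra hab
    push_neg at hab
    exact absurd h (not_le.2 (hslope hb ha hab))
  -- the auxiliary monotone function Ψ
  set Ψ : ℝ → ℝ := fun t => Real.exp (-(2 * δ * κ * t)) * (1 + κ * (-Λ' t) / F (-Λ' t))
    with hΨdef
  set Q : ℝ → ℝ := fun t =>
    (κ * (-Λ'' t) * F (-Λ' t) - κ * (-Λ' t) * (F' (-Λ' t) * (-Λ'' t))) / F (-Λ' t) ^ 2
    with hQdef
  set Ψ' : ℝ → ℝ := fun t =>
    Real.exp (-(2 * δ * κ * t)) * (-(2 * δ * κ)) * (1 + κ * (-Λ' t) / F (-Λ' t)) +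
      Real.exp (-(2 * δ * κ * t)) * Q t with hΨ'def
  have hΨd : ∀ t ∈ Ici (0:ℝ), HasDerivWithinAt Ψ (Ψ' t) (Ici 0) t := by
    intro t ht
    have hd' : HasDerivWithinAt (fun s => -Λ' s) (-Λ'' t) (Ici 0) t := (hΛd' t ht).neg
    have hF1 : HasDerivWithinAt (fun s => F (-Λ' s)) (F' (-Λ' t) * (-Λ'' t)) (Ici 0) t :=
      (hFderiv _ (hu t ht)).comp_hasDerivWithinAt t hd'
    have hnum : HasDerivWithinAt (fun s => κ * (-Λ' s)) (κ * (-Λ'' t)) (Ici 0) t :=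
      hd'.const_mul κ
    have hq : HasDerivWithinAt (fun s => κ * (-Λ' s) / F (-Λ' s)) (Q t) (Ici 0) t :=
      hnum.div hF1 (hFu t ht).ne'
    have h1 : HasDerivWithinAt (fun s => 1 + κ * (-Λ' s) / F (-Λ' s)) (Q t) (Ici 0) t :=
      hq.const_add 1
    have hinner : HasDerivAt (fun s : ℝ => -(2 * δ * κ * s)) (-(2 * δ * κ)) t := by
      have h := ((hasDerivAt_id t).const_mul (2 * δ * κ)).neg
      simp only [mul_one, id] at h; exact h
    have hexp : HasDerivAt (fun s : ℝ => Real.exp (-(2 * δ * κ * s)))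
        (Real.exp (-(2 * δ * κ * t)) * (-(2 * δ * κ))) t :=
      (Real.hasDerivAt_exp _).comp t hinner
    exact hexp.hasDerivWithinAt.mul h1
  have hΨ'0 : ∀ t ∈ Ici (0:ℝ), 0 ≤ Ψ' t := by
    intro t ht
    have hup : 0 < -Λ' t := hu t ht
    have hvp : 0 < F (-Λ' t) := hFu t ht
    set u : ℝ := -Λ' t
    set A : ℝ := -Λ'' t
    set v : ℝ := F (-Λ' t)
    set w : ℝ := F' (-Λ' t)
    have hA : A ≤ -(2 * κ * u + 2 * v) := by
      have := hODE t ht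
      simp only [u, A, v] at *
      linarith
    have hB : v - u * w ≤ -δ * v := by
      have := hFgrow (-Λ' t) hup
      simp only [u, v, w] at *
      nlinarith
    have hBneg : v - u * w < 0 := by nlinarith
    have e1 : 0 ≤ (-(2 * κ * u + 2 * v) - A) * (-(v - u * w)) :=
      mul_nonneg (by linarith) (by linarith)
    have e2 : 0 ≤ (2 * κ * u + 2 * v) * (-δ * v - (v - u * w)) :=
      mul_nonneg (by nlinarith) (by linarith)
    have hprod : (2 * κ * u + 2 * v) * (δ * v) ≤ A * (v - u * w) := by nlinarith
    have hQval : Q t = (κ * (A * (v - u * w))) / v ^ 2 := by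
      simp only [hQdef, u, A, v, w]; ring
    have hnumer : 2 * δ * κ * (v ^ 2 + κ * u * v) ≤ κ * (A * (v - u * w)) := by
      nlinarith [mul_le_mul_of_nonneg_left hprod hκ.le]
    have hkey : 2 * δ * κ * (1 + κ * u / v) ≤ Q t := by
      rw [hQval, le_div_iff₀ (by positivity : (0:ℝ) < v ^ 2)]
      have h2 : (2 * δ * κ * (1 + κ * u / v)) * v ^ 2 = 2 * δ * κ * (v ^ 2 + κ * u * v) := by
        field_simp
      rw [h2]; exact hnumer
    have hep : 0 < Real.exp (-(2 * δ * κ * t)) := Real.exp_pos _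
    have : Ψ' t = Real.exp (-(2 * δ * κ * t)) * (Q t - 2 * δ * κ * (1 + κ * u / v)) := by
      simp only [hΨ'def, u, v]; ring
    rw [this]
    exact mul_nonneg hep.le (by linarith)
  have hΨmono : MonotoneOn Ψ (Ici (0:ℝ)) := by
    apply monotoneOn_of_hasDerivWithinAt_nonneg (convex_Ici 0) (f' := Ψ')
    · intro x hx; exact (hΨd x hx).continuousWithinAt
    · intro x hx
      exact (hΨd x (interior_subset hx)).mono interior_subset
    · intro x hx
      exact hΨ'0 x (interior_subset hx)
  -- the pointwise bound
  have hptw : ∀ t ∈ Ici (0:ℝ), -Λ' t ≤ G (κ / (Real.exp (2 * δ * κ * t) * C - 1)) := by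
    intro t ht
    have ht0 : (0:ℝ) ≤ t := ht
    have hΨ0 : Ψ 0 = C := by simp [hΨdef, hCdef]
    have h0 : C ≤ Ψ t := hΨ0 ▸ hΨmono self_mem_Ici ht ht0
    have hexp1 : 1 ≤ Real.exp (2 * δ * κ * t) := Real.one_le_exp (by positivity)
    have hDpos : 0 < Real.exp (2 * δ * κ * t) * C - 1 := by nlinarith
    set D : ℝ := Real.exp (2 * δ * κ * t) * C - 1 with hDdef
    have hup : 0 < -Λ' t := hu t ht
    have hvp : 0 < F (-Λ' t) := hFu t ht
    -- from Ψ monotone: exp(2δκt) * C ≤ 1 + κ u / v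
    have h1 : Real.exp (2 * δ * κ * t) * C ≤ 1 + κ * (-Λ' t) / F (-Λ' t) := by
      have hΨt : Ψ t = Real.exp (-(2 * δ * κ * t)) * (1 + κ * (-Λ' t) / F (-Λ' t)) := rfl
      have hee : Real.exp (2 * δ * κ * t) * Real.exp (-(2 * δ * κ * t)) = 1 := by
        rw [← Real.exp_add]; simp
      calc Real.exp (2 * δ * κ * t) * C ≤ Real.exp (2 * δ * κ * t) * Ψ t :=
            mul_le_mul_of_nonneg_left h0 (Real.exp_pos _).le
        _ = 1 + κ * (-Λ' t) / F (-Λ' t) := by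
            rw [hΨt, ← mul_assoc, hee, one_mul]
    have h2 : D ≤ κ * (-Λ' t) / F (-Λ' t) := by simp only [hDdef]; linarith
    have h3 : F (-Λ' t) / (-Λ' t) ≤ κ / D := by
      rw [div_le_div_iff₀ hup hDpos]
      have h4 : D * F (-Λ' t) ≤ κ * (-Λ' t) := by
        have := (le_div_iff₀ hvp).1 h2
        linarith
      linarith
    have hs : 0 < κ / D := div_pos hκ hDpos
    obtain ⟨hGpos, hGeq⟩ := hG2 _ hs
    exact hsl _ _ hup hGpos (by rw [hGeq]; exact h3)
  -- continuity/integrability facts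
  have hΛ'cont : ContinuousOn Λ' (Ici (0:ℝ)) := fun t ht => (hΛd' t ht).continuousWithinAt
  have hΛcont : ContinuousOn Λ (Ici (0:ℝ)) := fun t ht => (hΛd t ht).continuousWithinAt
  -- key integral bound for each T ≥ 0
  have hT : ∀ T : ℝ, 0 ≤ T → ENNReal.ofReal (Λ 0 - Λ T) ≤
      ∫⁻ t in Ioi (0:ℝ), ENNReal.ofReal
        (G (κ / (Real.exp (2 * δ * κ * t) * C - 1))) := by
    intro T hT0
    have hII : IntervalIntegrable Λ' volume 0 T := by
      apply ContinuousOn.intervalIntegrable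
      rw [uIcc_of_le hT0]
      exact hΛ'cont.mono (Icc_subset_Ici_self)
    have hFTC : ∫ t in (0:ℝ)..T, Λ' t = Λ T - Λ 0 := by
      apply intervalIntegral.integral_eq_sub_of_hasDeriv_right_of_le hT0
        (hΛcont.mono Icc_subset_Ici_self) _ hII
      intro x hx
      exact (hΛd x hx.1.le).mono (fun y hy => (hx.1.trans hy).le)
    have hset : Λ 0 - Λ T = ∫ t in Ioc (0:ℝ) T, (-Λ' t) := by
      rw [← intervalIntegral.integral_of_le hT0, intervalIntegral.integral_neg, hFTC]
      ring
    rw [hset]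
    have hint : IntegrableOn (fun t => -Λ' t) (Ioc 0 T) volume := by
      apply IntegrableOn.mono_set _ Ioc_subset_Icc_self
      exact ((hΛ'cont.mono Icc_subset_Ici_self).neg).integrableOn_Icc
    calc ENNReal.ofReal (∫ t in Ioc (0:ℝ) T, (-Λ' t)) =
          ∫⁻ t in Ioc (0:ℝ) T, ENNReal.ofReal (-Λ' t) := by
          apply ofReal_integral_eq_lintegral_ofReal hint
          exact (ae_restrict_iff' measurableSet_Ioc).2
            (Filter.Eventually.of_forall fun t htm => (hu t htm.1.le).le)
      _ ≤ ∫⁻ t in Ioc (0:ℝ) T, ENNReal.ofReal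
            (G (κ / (Real.exp (2 * δ * κ * t) * C - 1))) := by
          apply lintegral_mono_ae
          exact (ae_restrict_iff' measurableSet_Ioc).2
            (Filter.Eventually.of_forall fun t htm =>
              ENNReal.ofReal_le_ofReal (hptw t htm.1.le))
      _ ≤ ∫⁻ t in Ioi (0:ℝ), ENNReal.ofReal
            (G (κ / (Real.exp (2 * δ * κ * t) * C - 1))) :=
          lintegral_mono_set Ioc_subset_Ioi_self
  -- take the limit T → ∞
  have htends : Tendsto (fun T => ENNReal.ofReal (Λ 0 - Λ T)) atTop
      (nhds (ENNReal.ofReal (Λ 0))) := by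
    have h1 : Tendsto (fun T => Λ 0 - Λ T) atTop (nhds (Λ 0)) := by
      have := tendsto_const_nhds (x := Λ 0) (f := atTop (α := ℝ)) |>.sub hlim
      simpa using this
    exact (ENNReal.continuous_ofReal.tendsto _).comp h1
  exact le_of_tendsto htends ((eventually_ge_atTop 0).mono fun T hT' => hT T hT')
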